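/- Derivative bound for rational Bézier curves: let γ(t) = (Σᵢ wᵢ Bernstein(n,i,t) Pᵢ) / (Σᵢ wᵢ Bernstein(n,i,t)) with all weights wᵢ > 0, W = maxᵢ wᵢ, w = minᵢ wᵢ. Then for all t ∈ [0,1], ‖γ'(t)‖ ≤ n · (W/w)² · max_{1≤i≤n} ‖Pᵢ − Pᵢ₋₁‖. -/

import Mathlib

open Finset

namespace RatBezAux

noncomputable def bb (n i : ℕ) (t : ℝ) : ℝ := (n.choose i : ℝ) * t ^ i * (1 - t) ^ (n - i)

noncomputable def bd (n i : ℕ) (t : ℝ) : ℝ :=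
  (n.choose i : ℝ) * ((i : ℝ) * t ^ (i - 1) * (1 - t) ^ (n - i)
    - ((n - i : ℕ) : ℝ) * t ^ i * (1 - t) ^ (n - i - 1))

noncomputable def TT (n i j : ℕ) (t : ℝ) : ℝ :=
  ((i : ℝ) - j) ^ 2 * (n.choose i : ℝ) * (n.choose j : ℝ)
    * t ^ (i + j - 1) * (1 - t) ^ (2 * n - 1 - (i + j))

lemma hasDerivAt_bb (n i : ℕ) (t : ℝ) : HasDerivAt (fun s => bb n i s) (bd n i t) t := by
  have h1 : HasDerivAt (fun s : ℝ => s ^ i) ((i : ℝ) * t ^ (i - 1)) t := hasDerivAt_pow i t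
  have h2 : HasDerivAt (fun s : ℝ => (1 - s) ^ (n - i))
      (((n - i : ℕ) : ℝ) * (1 - t) ^ (n - i - 1) * (-1)) t := by
    have := ((hasDerivAt_id t).const_sub (1:ℝ)).fun_pow (n - i)
    simpa using this
  have h3 := (h1.fun_mul h2).const_mul ((n.choose i : ℝ))
  have hfun : (fun s => bb n i s) = fun s => (n.choose i : ℝ) * (s ^ i * (1 - s) ^ (n - i)) := by
    funext s; simp [bb, mul_assoc]
  rw [hfun]
  refine h3.congr_deriv ?_
  simp only [bd]; ring

lemma key_lt (n i j : ℕ) (hij : i < j) (hj : j ≤ n) (t : ℝ) :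
    bd n i t * bb n j t - bb n i t * bd n j t
    = ((i:ℝ) - (j:ℝ)) * (n.choose i : ℝ) * (n.choose j : ℝ)
        * t ^ (i + j - 1) * (1 - t) ^ (2 * n - 1 - (i + j)) := by
  obtain ⟨a, rfl⟩ : ∃ a, j = i + (a + 1) := ⟨j - i - 1, by omega⟩
  obtain ⟨c, rfl⟩ : ∃ c, n = i + (a + 1) + c := ⟨n - (i + (a+1)), by omega⟩
  simp only [bb, bd]
  have e1 : i + (a + 1) + c - i = a + 1 + c := by omega
  have e3 : i + (a + 1) + c - (i + (a + 1)) = c := by omega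
  rw [e1, e3]
  have e2 : a + 1 + c - 1 = a + c := by omega
  have e4 : i + (a + 1) - 1 = i + a := by omega
  have e5 : i + (i + (a + 1)) - 1 = i + (i + a) := by omega
  have e6 : 2 * (i + (a + 1) + c) - 1 - (i + (i + (a + 1))) = a + 2 * c := by omega
  rw [e2, e4, e5, e6]
  have hu : t + (1 - t) = 1 := by ring
  generalize (1:ℝ) - t = u at hu ⊢
  rcases i with _ | i <;> rcases c with _ | c
  · push_cast
    linear_combination ((0:ℝ) - (a + 1)) * ((0+(a+1)+0).choose 0 : ℝ)
      * ((0+(a+1)+0).choose (0+(a+1)) : ℝ) * t ^ (0 + (0 + a)) * u ^ (a + 2*0) * hu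
  · push_cast
    linear_combination ((0:ℝ) - (a + 1)) * ((0+(a+1)+(c+1)).choose 0 : ℝ)
      * ((0+(a+1)+(c+1)).choose (0+(a+1)) : ℝ) * t ^ (0 + (0 + a)) * u ^ (a + 2*(c+1)) * hu
  · push_cast
    linear_combination (-(a:ℝ) - 1) * (((i+1)+(a+1)+0).choose (i+1) : ℝ)
      * (((i+1)+(a+1)+0).choose ((i+1)+(a+1)) : ℝ) * t ^ ((i+1) + ((i+1) + a)) * u ^ (a + 2*0) * hu
  · push_cast
    linear_combination (-(a:ℝ) - 1) * (((i+1)+(a+1)+(c+1)).choose (i+1) : ℝ)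
      * (((i+1)+(a+1)+(c+1)).choose ((i+1)+(a+1)) : ℝ) * t ^ ((i+1) + ((i+1) + a)) * u ^ (a + 2*(c+1)) * hu

lemma key (n i j : ℕ) (hi : i ≤ n) (hj : j ≤ n) (t : ℝ) :
    bd n i t * bb n j t - bb n i t * bd n j t
    = ((i:ℝ) - (j:ℝ)) * (n.choose i : ℝ) * (n.choose j : ℝ)
        * t ^ (i + j - 1) * (1 - t) ^ (2 * n - 1 - (i + j)) := by
  rcases lt_trichotomy i j with h | rfl | h
  · exact key_lt n i j h hj t
  · have : (i:ℝ) - i = 0 := sub_self _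
    rw [this]; ring
  · have hc := key_lt n j i h hi t
    rw [Nat.add_comm j i] at hc
    linear_combination -hc

lemma tt_mul (n i j : ℕ) (hi : i ≤ n) (hj : j ≤ n) (t : ℝ) :
    t * (1 - t) * TT n i j t = ((i : ℝ) - j) ^ 2 * bb n i t * bb n j t := by
  rcases eq_or_ne i j with rfl | hne
  · simp [TT]
  · have h1 : i + j - 1 + 1 = i + j := by omega
    have h2 : 2 * n - 1 - (i + j) + 1 = 2 * n - (i + j) := by omega
    have h3 : n - i + (n - j) = 2 * n - (i + j) := by omega
    calc t * (1 - t) * TT n i j t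
        = ((i : ℝ) - j) ^ 2 * (n.choose i : ℝ) * (n.choose j : ℝ)
            * (t ^ (i + j - 1) * t) * ((1 - t) ^ (2 * n - 1 - (i + j)) * (1 - t)) := by
          simp only [TT]; ring
      _ = ((i : ℝ) - j) ^ 2 * (n.choose i : ℝ) * (n.choose j : ℝ)
            * t ^ (i + j) * (1 - t) ^ (2 * n - (i + j)) := by
          rw [← pow_succ, ← pow_succ, h1, h2]
      _ = ((i : ℝ) - j) ^ 2 * (n.choose i : ℝ) * (n.choose j : ℝ)
            * (t ^ i * t ^ j) * ((1 - t) ^ (n - i) * (1 - t) ^ (n - j)) := by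
          rw [← pow_add, ← pow_add, h3]
      _ = ((i : ℝ) - j) ^ 2 * bb n i t * bb n j t := by
          simp only [bb]; ring

lemma bb_eval (n i : ℕ) (t : ℝ) : (bernsteinPolynomial ℝ n i).eval t = bb n i t := by
  simp [bernsteinPolynomial, bb]

lemma sum_bb (n : ℕ) (t : ℝ) : ∑ i ∈ range (n + 1), bb n i t = 1 := by
  have := congrArg (Polynomial.eval t) (bernsteinPolynomial.sum ℝ n)
  simpa [Polynomial.eval_finset_sum, bb_eval] using this

lemma sum_i_bb (n : ℕ) (t : ℝ) : ∑ i ∈ range (n + 1), (i : ℝ) * bb n i t = n * t := by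
  have := congrArg (Polynomial.eval t) (bernsteinPolynomial.sum_smul ℝ n)
  simpa [Polynomial.eval_finset_sum, bb_eval, mul_comm] using this

lemma cast_sq (i : ℕ) : ((i * (i - 1) : ℕ) : ℝ) = (i : ℝ) ^ 2 - i := by
  cases i with
  | zero => simp
  | succ k => push_cast [Nat.succ_sub_one]; ring

lemma sum_sq_bb (n : ℕ) (t : ℝ) :
    ∑ i ∈ range (n + 1), (i : ℝ) ^ 2 * bb n i t
      = ((n * (n - 1) : ℕ) : ℝ) * t ^ 2 + n * t := by
  have := congrArg (Polynomial.eval t) (bernsteinPolynomial.sum_mul_smul ℝ n)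
  simp only [Polynomial.eval_finset_sum, Polynomial.eval_smul, bb_eval, smul_eq_mul,
    Polynomial.eval_pow, Polynomial.eval_X, Polynomial.eval_natCast] at this
  have h2 : ∑ i ∈ range (n + 1), ((i * (i - 1) : ℕ) : ℝ) * bb n i t
      = ((n * (n - 1) : ℕ) : ℝ) * t ^ 2 := by
    simpa using this
  have h3 : ∑ i ∈ range (n + 1), ((i : ℝ) ^ 2 - i) * bb n i t
      = ((n * (n - 1) : ℕ) : ℝ) * t ^ 2 := by
    rw [← h2]; exact Finset.sum_congr rfl fun i _ => by rw [cast_sq]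
  have h4 := sum_i_bb n t
  calc ∑ i ∈ range (n + 1), (i : ℝ) ^ 2 * bb n i t
      = ∑ i ∈ range (n + 1), (((i : ℝ) ^ 2 - i) * bb n i t + (i : ℝ) * bb n i t) := by
        exact Finset.sum_congr rfl fun i _ => by ring
    _ = ((n * (n - 1) : ℕ) : ℝ) * t ^ 2 + n * t := by
        rw [Finset.sum_add_distrib, h3, h4]

lemma var_sum (s : Finset ℕ) (f g : ℕ → ℝ) :
    ∑ i ∈ s, ∑ j ∈ s, (f i - f j) ^ 2 * g i * g j
      = 2 * ((∑ i ∈ s, f i ^ 2 * g i) * (∑ i ∈ s, g i) - (∑ i ∈ s, f i * g i) ^ 2) := by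
  have step1 : ∀ i, ∑ j ∈ s, (f i - f j) ^ 2 * g i * g j
      = (f i ^ 2 * g i) * (∑ j ∈ s, g j) - (2 * (f i * g i)) * (∑ j ∈ s, f j * g j)
        + g i * (∑ j ∈ s, f j ^ 2 * g j) := by
    intro i
    rw [Finset.mul_sum, Finset.mul_sum, Finset.mul_sum, ← Finset.sum_sub_distrib,
      ← Finset.sum_add_distrib]
    exact Finset.sum_congr rfl fun j _ => by ring
  rw [Finset.sum_congr rfl fun i _ => step1 i]
  rw [Finset.sum_add_distrib, Finset.sum_sub_distrib, ← Finset.sum_mul, ← Finset.sum_mul,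
    ← Finset.sum_mul]
  have : ∑ i ∈ s, 2 * (f i * g i) = 2 * ∑ i ∈ s, f i * g i := by
    rw [Finset.mul_sum]
  rw [this]
  ring

lemma S2_Ioo (n : ℕ) (t : ℝ) (h0 : 0 < t) (h1 : t < 1) :
    ∑ i ∈ range (n + 1), ∑ j ∈ range (n + 1), TT n i j t = 2 * n := by
  have hpos : t * (1 - t) ≠ 0 := ne_of_gt (mul_pos h0 (by linarith))
  apply mul_left_cancel₀ hpos
  calc t * (1 - t) * ∑ i ∈ range (n + 1), ∑ j ∈ range (n + 1), TT n i j t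
      = ∑ i ∈ range (n + 1), ∑ j ∈ range (n + 1), t * (1 - t) * TT n i j t := by
        rw [Finset.mul_sum]; exact Finset.sum_congr rfl fun i _ => by rw [Finset.mul_sum]
    _ = ∑ i ∈ range (n + 1), ∑ j ∈ range (n + 1),
          ((i : ℝ) - j) ^ 2 * bb n i t * bb n j t := by
        refine Finset.sum_congr rfl fun i hi => Finset.sum_congr rfl fun j hj => ?_
        exact tt_mul n i j (Nat.lt_succ_iff.mp (mem_range.mp hi))
          (Nat.lt_succ_iff.mp (mem_range.mp hj)) t
    _ = 2 * ((∑ i ∈ range (n + 1), (i : ℝ) ^ 2 * bb n i t)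
          * (∑ i ∈ range (n + 1), bb n i t)
          - (∑ i ∈ range (n + 1), (i : ℝ) * bb n i t) ^ 2) :=
        var_sum (range (n + 1)) (fun i => (i : ℝ)) (fun i => bb n i t)
    _ = t * (1 - t) * (2 * n) := by
        rw [sum_bb, sum_i_bb, sum_sq_bb, cast_sq]; ring

lemma S2_Icc (n : ℕ) (t : ℝ) (ht : t ∈ Set.Icc (0 : ℝ) 1) :
    ∑ i ∈ range (n + 1), ∑ j ∈ range (n + 1), TT n i j t = 2 * n := by
  have hcont : Continuous (fun s : ℝ =>
      ∑ i ∈ range (n + 1), ∑ j ∈ range (n + 1), TT n i j s) := by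
    apply continuous_finset_sum; intro i _
    apply continuous_finset_sum; intro j _
    unfold TT; fun_prop
  have heq : Set.EqOn (fun s : ℝ =>
      ∑ i ∈ range (n + 1), ∑ j ∈ range (n + 1), TT n i j s)
      (fun _ => 2 * (n : ℝ)) (Set.Ioo 0 1) := fun x hx => S2_Ioo n x hx.1 hx.2
  have h2 := heq.closure hcont continuous_const
  rw [closure_Ioo (by norm_num : (0:ℝ) ≠ 1)] at h2
  exact h2 ht

lemma norm_sub_le_abs (n : ℕ) (P : ℕ → ℝ × ℝ) (M : ℝ)
    (hMk : ∀ k, 1 ≤ k → k ≤ n → ‖P k - P (k - 1)‖ ≤ M)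
    (i j : ℕ) (hi : i ≤ n) (hj : j ≤ n) :
    ‖P i - P j‖ ≤ |(i : ℝ) - j| * M := by
  have aux : ∀ a b : ℕ, a ≤ b → b ≤ n → ‖P b - P a‖ ≤ ((b : ℝ) - a) * M := by
    intro a b hab hbn
    have hsum := Finset.sum_range_sub (fun k => P (a + k)) (b - a)
    rw [show a + (b - a) = b from by omega, Nat.add_zero] at hsum
    rw [← hsum]
    calc ‖∑ k ∈ range (b - a), (P (a + (k + 1)) - P (a + k))‖
        ≤ ∑ k ∈ range (b - a), ‖P (a + (k + 1)) - P (a + k)‖ := norm_sum_le _ _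
      _ ≤ ∑ _k ∈ range (b - a), M := by
          refine Finset.sum_le_sum fun k hk => ?_
          have hk' := mem_range.mp hk
          have := hMk (a + (k + 1)) (by omega) (by omega)
          simpa [show a + (k + 1) - 1 = a + k from by omega] using this
      _ = ((b - a : ℕ) : ℝ) * M := by
          rw [Finset.sum_const, Finset.card_range, nsmul_eq_mul]
      _ = ((b : ℝ) - a) * M := by rw [Nat.cast_sub hab]
  rcases le_total i j with h | h
  · have habs : |(i:ℝ) - j| = (j:ℝ) - i := by
      rw [abs_sub_comm]; exact abs_of_nonneg (sub_nonneg.mpr (Nat.cast_le.mpr h))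
    rw [norm_sub_rev, habs]; exact aux i j h hj
  · have habs : |(i:ℝ) - j| = (i:ℝ) - j :=
      abs_of_nonneg (sub_nonneg.mpr (Nat.cast_le.mpr h))
    rw [habs]; exact aux j i h hi

end RatBezAux

open RatBezAux

/-- Derivative bound for a rational Bézier curve with positive weights:
`‖γ'(t)‖ ≤ n · (W/w)² · maxᵢ ‖Pᵢ − Pᵢ₋₁‖`, where `W` and `w` are the largest and smallest
weights. -/
theorem rational_bezier_deriv_bound (n : ℕ) (hn : 1 ≤ n)
    (P : ℕ → ℝ × ℝ) (wt : ℕ → ℝ) (hw : ∀ i ≤ n, 0 < wt i)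
    (γ : ℝ → ℝ × ℝ)
    (hγ : ∀ t : ℝ, γ t =
      (∑ i ∈ Finset.range (n + 1),
          ((n.choose i : ℝ) * t ^ i * (1 - t) ^ (n - i) * wt i))⁻¹ •
        ∑ i ∈ Finset.range (n + 1),
          ((n.choose i : ℝ) * t ^ i * (1 - t) ^ (n - i) * wt i) • P i)
    (W w : ℝ)
    (hW : W = (Finset.range (n + 1)).sup' Finset.nonempty_range_add_one wt)
    (hw' : w = (Finset.range (n + 1)).inf' Finset.nonempty_range_add_one wt)
    (t : ℝ) (ht : t ∈ Set.Icc (0:ℝ) 1) (d : ℝ × ℝ) (hd : HasDerivAt γ d t) :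
    ‖d‖ ≤ n * (W / w) ^ 2 *
      (Finset.Icc 1 n).sup' (Finset.nonempty_Icc.mpr hn)
        (fun i => ‖P i - P (i - 1)‖) := by
  have ht0 : (0:ℝ) ≤ t := ht.1
  have ht1 : (0:ℝ) ≤ 1 - t := by have := ht.2; linarith
  -- weights
  have hwle : ∀ i ≤ n, w ≤ wt i := fun i hi =>
    hw' ▸ Finset.inf'_le wt (mem_range.mpr (Nat.lt_succ_of_le hi))
  have hwge : ∀ i ≤ n, wt i ≤ W := fun i hi =>
    hW ▸ Finset.le_sup' wt (mem_range.mpr (Nat.lt_succ_of_le hi))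
  have hw0 : 0 < w := by
    obtain ⟨i₀, hi₀, hEq⟩ := Finset.exists_mem_eq_inf' Finset.nonempty_range_add_one wt
    rw [hw', hEq]
    exact hw i₀ (Nat.lt_succ_iff.mp (mem_range.mp hi₀))
  -- M
  set M := (Finset.Icc 1 n).sup' (Finset.nonempty_Icc.mpr hn)
      (fun i => ‖P i - P (i - 1)‖) with hMdef
  have hMk : ∀ k, 1 ≤ k → k ≤ n → ‖P k - P (k - 1)‖ ≤ M := fun k h1 h2 => by
    rw [hMdef]
    exact Finset.le_sup' (fun i => ‖P i - P (i - 1)‖) (mem_Icc.mpr ⟨h1, h2⟩)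
  have hM0 : 0 ≤ M := le_trans (norm_nonneg _) (hMk 1 le_rfl hn)
  have hPij : ∀ i ≤ n, ∀ j ≤ n, ‖P i - P j‖ ≤ |(i : ℝ) - j| * M :=
    fun i hi j hj => norm_sub_le_abs n P M hMk i j hi hj
  -- bb nonneg
  have hbb0 : ∀ i, 0 ≤ bb n i t := fun i => by
    unfold bb
    have : (0:ℝ) ≤ (n.choose i : ℝ) := Nat.cast_nonneg _
    positivity
  -- γ as quotient
  have hγ' : γ = fun s : ℝ =>
      (∑ i ∈ range (n + 1), bb n i s * wt i)⁻¹ •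
        ∑ i ∈ range (n + 1), (bb n i s * wt i) • P i := by
    funext s; rw [hγ s]; rfl
  rw [hγ'] at hd
  -- derivative pieces
  have hD' : HasDerivAt (fun s => ∑ i ∈ range (n + 1), bb n i s * wt i)
      (∑ i ∈ range (n + 1), bd n i t * wt i) t :=
    HasDerivAt.fun_sum fun i _ => (hasDerivAt_bb n i t).mul_const (wt i)
  have hN' : HasDerivAt (fun s => ∑ i ∈ range (n + 1), (bb n i s * wt i) • P i)
      (∑ i ∈ range (n + 1), (bd n i t * wt i) • P i) t :=
    HasDerivAt.fun_sum fun i _ => ((hasDerivAt_bb n i t).mul_const (wt i)).smul_const (P i)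
  set Dt := ∑ i ∈ range (n + 1), bb n i t * wt i with hDtdef
  set D't := ∑ i ∈ range (n + 1), bd n i t * wt i with hD'tdef
  set Nt := ∑ i ∈ range (n + 1), (bb n i t * wt i) • P i with hNtdef
  set N't := ∑ i ∈ range (n + 1), (bd n i t * wt i) • P i with hN'tdef
  have hDge : w ≤ Dt := by
    calc w = (∑ i ∈ range (n + 1), bb n i t) * w := by rw [sum_bb]; ring
      _ = ∑ i ∈ range (n + 1), bb n i t * w := by rw [Finset.sum_mul]
      _ ≤ ∑ i ∈ range (n + 1), bb n i t * wt i := by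
          refine Finset.sum_le_sum fun i hi => ?_
          exact mul_le_mul_of_nonneg_left
            (hwle i (Nat.lt_succ_iff.mp (mem_range.mp hi))) (hbb0 i)
  have hDpos : 0 < Dt := lt_of_lt_of_le hw0 hDge
  have hDne : Dt ≠ 0 := ne_of_gt hDpos
  have hder : HasDerivAt (fun s : ℝ =>
      (∑ i ∈ range (n + 1), bb n i s * wt i)⁻¹ •
        ∑ i ∈ range (n + 1), (bb n i s * wt i) • P i)
      (Dt⁻¹ • N't + (-D't / Dt ^ 2) • Nt) t :=
    (hD'.inv hDne).smul hN'
  have hdEq : d = Dt⁻¹ • N't + (-D't / Dt ^ 2) • Nt := hd.unique hder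
  have hdEq2 : d = (Dt ^ 2)⁻¹ • (Dt • N't - D't • Nt) := by
    rw [hdEq]
    match_scalars <;> field_simp <;> ring
  -- double sum representation
  set F := fun i j => wt i * wt j * (bd n i t * bb n j t - bb n i t * bd n j t) with hFdef
  have hV : Dt • N't - D't • Nt = ∑ i ∈ range (n + 1), ∑ j ∈ range (n + 1),
      F i j • P i := by
    simp only [hFdef]
    rw [hN'tdef, hNtdef, Finset.smul_sum, Finset.smul_sum, ← Finset.sum_sub_distrib]
    refine Finset.sum_congr rfl fun i _ => ?_
    rw [smul_smul, smul_smul, ← sub_smul, ← Finset.sum_smul]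
    congr 1
    rw [hDtdef, hD'tdef, Finset.sum_mul, Finset.sum_mul, ← Finset.sum_sub_distrib]
    exact Finset.sum_congr rfl fun j _ => by ring
  have hswap : (∑ i ∈ range (n + 1), ∑ j ∈ range (n + 1), F i j • P j)
      = - ∑ i ∈ range (n + 1), ∑ j ∈ range (n + 1), F i j • P i := by
    rw [Finset.sum_comm]
    calc (∑ j ∈ range (n + 1), ∑ i ∈ range (n + 1), F i j • P j)
        = ∑ j ∈ range (n + 1), ∑ i ∈ range (n + 1), -(F j i • P j) := by
          refine Finset.sum_congr rfl fun j _ => Finset.sum_congr rfl fun i _ => ?_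
          have : F i j = -F j i := by simp only [hFdef]; ring
          rw [this, neg_smul]
      _ = - ∑ j ∈ range (n + 1), ∑ i ∈ range (n + 1), F j i • P j := by
          simp [Finset.sum_neg_distrib]
  have h2V : (2:ℝ) • (∑ i ∈ range (n + 1), ∑ j ∈ range (n + 1), F i j • P i)
      = ∑ i ∈ range (n + 1), ∑ j ∈ range (n + 1), F i j • (P i - P j) := by
    have : ∑ i ∈ range (n + 1), ∑ j ∈ range (n + 1), F i j • (P i - P j)
        = (∑ i ∈ range (n + 1), ∑ j ∈ range (n + 1), F i j • P i)
          - ∑ i ∈ range (n + 1), ∑ j ∈ range (n + 1), F i j • P j := by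
      rw [← Finset.sum_sub_distrib]
      refine Finset.sum_congr rfl fun i _ => ?_
      rw [← Finset.sum_sub_distrib]
      exact Finset.sum_congr rfl fun j _ => smul_sub _ _ _
    rw [this, hswap, sub_neg_eq_add, two_smul]
  have hWpos : 0 < W := lt_of_lt_of_le hw0 (le_trans (hwle 0 (by omega)) (hwge 0 (by omega)))
  -- termwise norm bound
  have hterm : ∀ i ∈ range (n + 1), ∀ j ∈ range (n + 1),
      ‖F i j • (P i - P j)‖ ≤ W ^ 2 * M * TT n i j t := by
    intro i hi j hj
    have hi' : i ≤ n := Nat.lt_succ_iff.mp (mem_range.mp hi)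
    have hj' : j ≤ n := Nat.lt_succ_iff.mp (mem_range.mp hj)
    have hKey := key n i j hi' hj' t
    have hK0 : (0:ℝ) ≤ (n.choose i : ℝ) * (n.choose j : ℝ)
        * t ^ (i + j - 1) * (1 - t) ^ (2 * n - 1 - (i + j)) := by
      have := pow_nonneg ht0 (i + j - 1)
      have := pow_nonneg ht1 (2 * n - 1 - (i + j))
      positivity
    have habsF : |F i j| = wt i * wt j * (|(i:ℝ) - j| * ((n.choose i : ℝ) * (n.choose j : ℝ)
        * t ^ (i + j - 1) * (1 - t) ^ (2 * n - 1 - (i + j)))) := by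
      rw [hFdef]
      simp only []
      rw [hKey]
      rw [show wt i * wt j * (((i:ℝ) - j) * (n.choose i : ℝ) * (n.choose j : ℝ)
          * t ^ (i + j - 1) * (1 - t) ^ (2 * n - 1 - (i + j)))
        = (wt i * wt j) * (((i:ℝ) - j) * ((n.choose i : ℝ) * (n.choose j : ℝ)
          * t ^ (i + j - 1) * (1 - t) ^ (2 * n - 1 - (i + j)))) from by ring]
      rw [abs_mul, abs_mul, abs_mul, abs_of_pos (hw i hi'), abs_of_pos (hw j hj'),
        abs_of_nonneg hK0]
    rw [norm_smul, Real.norm_eq_abs, habsF]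
    calc wt i * wt j * (|(i:ℝ) - j| * ((n.choose i : ℝ) * (n.choose j : ℝ)
          * t ^ (i + j - 1) * (1 - t) ^ (2 * n - 1 - (i + j)))) * ‖P i - P j‖
        ≤ W * W * (|(i:ℝ) - j| * ((n.choose i : ℝ) * (n.choose j : ℝ)
          * t ^ (i + j - 1) * (1 - t) ^ (2 * n - 1 - (i + j)))) * (|(i:ℝ) - j| * M) := by
          have h1 : wt i ≤ W := hwge i hi'
          have h2 : wt j ≤ W := hwge j hj'
          have h3 : ‖P i - P j‖ ≤ |(i:ℝ) - j| * M := hPij i hi' j hj'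
          have hwi : 0 ≤ wt i := (hw i hi').le
          have hwj : 0 ≤ wt j := (hw j hj').le
          gcongr <;>
            first
              | exact hWpos.le
              | exact hwi
              | exact hwj
              | exact h1
              | exact h2
              | exact h3
              | exact mul_nonneg (abs_nonneg _) hK0
              | positivity
      _ = W ^ 2 * M * (|(i:ℝ) - j| ^ 2 * ((n.choose i : ℝ) * (n.choose j : ℝ)
          * t ^ (i + j - 1) * (1 - t) ^ (2 * n - 1 - (i + j)))) := by ring
      _ = W ^ 2 * M * TT n i j t := by rw [sq_abs]; simp only [TT]; ring
  -- sum bound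
  have hsumTT := S2_Icc n t ht
  have hVnorm : ‖∑ i ∈ range (n + 1), ∑ j ∈ range (n + 1), F i j • P i‖ ≤ n * W ^ 2 * M := by
    have hb : ‖∑ i ∈ range (n + 1), ∑ j ∈ range (n + 1), F i j • (P i - P j)‖
        ≤ W ^ 2 * M * (2 * n) := by
      calc ‖∑ i ∈ range (n + 1), ∑ j ∈ range (n + 1), F i j • (P i - P j)‖
          ≤ ∑ i ∈ range (n + 1), ‖∑ j ∈ range (n + 1), F i j • (P i - P j)‖ :=
            norm_sum_le _ _
        _ ≤ ∑ i ∈ range (n + 1), ∑ j ∈ range (n + 1), ‖F i j • (P i - P j)‖ :=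
            Finset.sum_le_sum fun i _ => norm_sum_le _ _
        _ ≤ ∑ i ∈ range (n + 1), ∑ j ∈ range (n + 1), W ^ 2 * M * TT n i j t :=
            Finset.sum_le_sum fun i hi => Finset.sum_le_sum fun j hj => hterm i hi j hj
        _ = W ^ 2 * M * ∑ i ∈ range (n + 1), ∑ j ∈ range (n + 1), TT n i j t := by
            rw [Finset.mul_sum]
            exact Finset.sum_congr rfl fun i _ => by rw [Finset.mul_sum]
        _ = W ^ 2 * M * (2 * n) := by rw [hsumTT]
    have h2n : ‖(2:ℝ) • (∑ i ∈ range (n + 1), ∑ j ∈ range (n + 1), F i j • P i)‖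
        = 2 * ‖∑ i ∈ range (n + 1), ∑ j ∈ range (n + 1), F i j • P i‖ := by
      rw [norm_smul]; norm_num
    rw [h2V] at h2n
    nlinarith [norm_nonneg (∑ i ∈ range (n + 1), ∑ j ∈ range (n + 1), F i j • P i)]
  -- final
  rw [hdEq2, hV]
  rw [norm_smul, Real.norm_eq_abs, abs_of_pos (by positivity : (0:ℝ) < (Dt ^ 2)⁻¹)]
  calc (Dt ^ 2)⁻¹ * ‖∑ i ∈ range (n + 1), ∑ j ∈ range (n + 1), F i j • P i‖
      ≤ (Dt ^ 2)⁻¹ * (n * W ^ 2 * M) := by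
        exact mul_le_mul_of_nonneg_left hVnorm (by positivity)
    _ ≤ (w ^ 2)⁻¹ * (n * W ^ 2 * M) := by
        have hle : w ^ 2 ≤ Dt ^ 2 := pow_le_pow_left₀ hw0.le hDge 2
        have : (Dt ^ 2)⁻¹ ≤ (w ^ 2)⁻¹ := by
          apply inv_anti₀ (by positivity) hle
        exact mul_le_mul_of_nonneg_right this (by positivity)
    _ = n * (W / w) ^ 2 * M := by
        field_simp
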